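/- The necklace-type bracket on trace functionals of the tensor algebra satisfies the Jacobi identity: {{R, S}, T} + {{T, R}, S} + {{S, T}, R} = 0 for all monomial trace functionals R, S, T. The key mechanism: terms in the triple bracket that contract two letters of R (one with a letter of S, one with a letter of T) appear with opposite signs in {{R,S},T} and {{T,R},S} and cancel; symmetrically for S and T. -/

import Mathlib

open scoped BigOperators Classical

/-- The product in the tensor algebra of the letters of a word. -/
noncomputable def wordProd (F : Type*) [Field F] {V : Type*} [AddCommGroup V] [Module F V]
    (w : List V) : TensorAlgebra F V :=
  (w.map (TensorAlgebra.ι F)).prod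

/-- The necklace bracket of two cyclic words, as a formal linear combination of cyclic
words: sum over all pairs of letters (one from each word), contract them via `ω`, and
concatenate the two remaining linear words `v_{j+1}⋯v_{j-1}` and `w_{i+1}⋯w_{i-1}`. -/
noncomputable def nb {F : Type*} [Field F] {V : Type*} [AddCommGroup V] [Module F V]
    (ω : V →ₗ[F] V →ₗ[F] F) (a b : List V) : (List V) →₀ F :=
  ∑ j : Fin a.length, ∑ i : Fin b.length,
    Finsupp.single ((a.rotate (j + 1)).dropLast ++ (b.rotate (i + 1)).dropLast)
      (ω (a.get j) (b.get i))

/-- The necklace bracket of a formal linear combination of words with a single word,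
extended linearly. -/
noncomputable def nbExt {F : Type*} [Field F] {V : Type*} [AddCommGroup V] [Module F V]
    (ω : V →ₗ[F] V →ₗ[F] F) (x : (List V) →₀ F) (c : List V) : (List V) →₀ F :=
  x.sum fun w cw => cw • nb ω w c

/-- The trace functional applied to a formal linear combination of words. -/
noncomputable def traceOf {F : Type*} [Field F] {V : Type*} [AddCommGroup V] [Module F V]
    (τ : TensorAlgebra F V →ₗ[F] F) (x : (List V) →₀ F) : F :=
  x.sum fun w c => c * τ (wordProd F w)

namespace JacobiAux

/-! ### List lemmas -/

lemma take_dropLast {α : Type*} (u : List α) (p : ℕ) (hp : p < u.length) :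
    (u.take (p+1)).dropLast = u.take p := by
  rw [List.dropLast_eq_take, List.length_take, List.take_take]
  congr 1
  omega

lemma rotApp {α : Type*} (u v : List α) (p : ℕ) (hp : p < u.length) :
    ((u ++ v).rotate (p+1)).dropLast = u.drop (p+1) ++ (v ++ u.take p) := by
  have h1 : p + 1 ≤ (u ++ v).length := by simp; omega
  have h2 : u.take (p+1) ≠ [] := by
    apply List.ne_nil_of_length_pos
    rw [List.length_take]; omega
  rw [List.rotate_eq_drop_append_take h1, List.drop_append_of_le_length hp,
    List.take_append_of_le_length hp, List.append_assoc,
    List.dropLast_append_of_ne_nil (List.append_ne_nil_of_right_ne_nil v h2),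
    List.dropLast_append_of_ne_nil h2, take_dropLast u p hp]

lemma rotApp2 {α : Type*} (u v : List α) (p : ℕ) (hp : p < v.length) :
    ((u ++ v).rotate (u.length + p + 1)).dropLast = v.drop (p+1) ++ (u ++ v.take p) := by
  have h0 : (u ++ v).rotate u.length = v ++ u := by
    rw [List.rotate_eq_drop_append_take (by simp), List.drop_left, List.take_left]
  have h1 : u.length + p + 1 = u.length + (p + 1) := by omega
  rw [h1, ← List.rotate_rotate, h0, rotApp v u p hp]

lemma lenD {α : Type*} (a : List α) (t : ℕ) :
    ((a.rotate t).dropLast).length = a.length - 1 := by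
  rw [List.length_dropLast, List.length_rotate]

lemma getD {α : Type*} (a : List α) (t j : ℕ) (h : t < ((a.rotate (j+1)).dropLast).length)
    (h' : (t + (j+1)) % a.length < a.length) :
    ((a.rotate (j+1)).dropLast)[t] = a[(t + (j+1)) % a.length] := by
  rw [List.getElem_dropLast, List.getElem_rotate]

lemma getElem_congr' {α : Type*} (l : List α) {x y : ℕ} (h : x = y) {hx : x < l.length}
    {hy : y < l.length} : l[x] = l[y] := by subst h; rfl

/-! ### Mod arithmetic -/

lemma modkey (n j p : ℕ) (hj : j < n) (hp : p < n - 1) :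
    (n - 2 - p + ((p + (j+1)) % n + 1)) % n = j := by
  have hm : n - 2 - p + ((p + (j+1)) % n + 1) ≡ n - 2 - p + ((p + (j+1)) + 1) [MOD n] :=
    ((Nat.mod_modEq _ n).add_right 1).add_left _
  rw [(hm : _ % n = _ % n)]
  have h2 : n - 2 - p + (p + (j+1) + 1) = n + j := by omega
  rw [h2, Nat.add_mod_left, Nat.mod_eq_of_lt hj]

lemma modkey2 (n j p t : ℕ) : (t + ((p + (j+1)) % n + 1)) % n = (p + 1 + t + (j+1)) % n := by
  have hm : t + ((p + (j+1)) % n + 1) ≡ t + ((p + (j+1)) + 1) [MOD n] :=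
    ((Nat.mod_modEq _ n).add_right 1).add_left t
  rw [(hm : _ % n = _ % n)]
  congr 1
  omega

lemma modkey3 (n j p t : ℕ) (hp : p < n - 1) :
    (n - 2 - p + 1 + t + ((p + (j+1)) % n + 1)) % n = (t + (j+1)) % n := by
  have hm : n - 2 - p + 1 + t + ((p + (j+1)) % n + 1)
      ≡ n - 2 - p + 1 + t + ((p + (j+1)) + 1) [MOD n] :=
    ((Nat.mod_modEq _ n).add_right 1).add_left _
  rw [(hm : _ % n = _ % n)]
  have h2 : n - 2 - p + 1 + t + (p + (j+1) + 1) = n + (t + (j+1)) := by omega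
  rw [h2, Nat.add_mod_left]

/-! ### The key list identities: the two arcs of `a` -/

lemma dtX {α : Type*} (a : List α) (j p : ℕ) (hj : j < a.length) (hp : p < a.length - 1) :
    ((a.rotate (j+1)).dropLast).drop (p+1)
      = ((a.rotate ((p + (j+1)) % a.length + 1)).dropLast).take (a.length - 2 - p) := by
  apply List.ext_getElem
  · simp only [List.length_drop, List.length_take, lenD]
    omega
  · intro t h1 h2
    rw [List.getElem_drop, List.getElem_take]
    have hd1 : p + 1 + t < ((a.rotate (j+1)).dropLast).length := by
      simp only [List.length_drop, lenD] at h1 ⊢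
      omega
    have hd2 : t < ((a.rotate ((p + (j+1)) % a.length + 1)).dropLast).length := by
      simp only [List.length_take, lenD] at h2 ⊢
      omega
    rw [getD a (p+1+t) j hd1 (Nat.mod_lt _ (by omega)),
      getD a t ((p + (j+1)) % a.length) hd2 (Nat.mod_lt _ (by omega))]
    exact getElem_congr' a (modkey2 a.length j p t).symm

lemma dtY {α : Type*} (a : List α) (j p : ℕ) (hj : j < a.length) (hp : p < a.length - 1) :
    ((a.rotate (j+1)).dropLast).take p
      = ((a.rotate ((p + (j+1)) % a.length + 1)).dropLast).drop (a.length - 2 - p + 1) := by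
  apply List.ext_getElem
  · simp only [List.length_drop, List.length_take, lenD]
    omega
  · intro t h1 h2
    rw [List.getElem_take, List.getElem_drop]
    have hd1 : t < ((a.rotate (j+1)).dropLast).length := by
      simp only [List.length_take, lenD] at h1 ⊢
      omega
    have hd2 : a.length - 2 - p + 1 + t < ((a.rotate ((p + (j+1)) % a.length + 1)).dropLast).length := by
      simp only [List.length_drop, lenD] at h2 ⊢
      omega
    rw [getD a t j hd1 (Nat.mod_lt _ (by omega)),
      getD a (a.length - 2 - p + 1 + t) ((p + (j+1)) % a.length) hd2 (Nat.mod_lt _ (by omega))]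
    exact getElem_congr' a (modkey3 a.length j p t hp).symm

/-! ### Sum lemmas -/

lemma sum_fin_append {M : Type*} [AddCommMonoid M] {α : Type*} (u v : List α)
    (f : Fin (u ++ v).length → M) :
    ∑ q, f q
      = (∑ p : Fin u.length, f (Fin.cast (List.length_append (as := u) (bs := v)).symm (Fin.castAdd v.length p)))
        + ∑ p : Fin v.length, f (Fin.cast (List.length_append (as := u) (bs := v)).symm (Fin.natAdd u.length p)) := by
  rw [← Fin.sum_congr' f (List.length_append (as := u) (bs := v)).symm, Fin.sum_univ_add]

lemma sum_fin_cast {M : Type*} [AddCommMonoid M] {m n : ℕ} (h : m = n) (f : Fin n → M) :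
    ∑ q : Fin n, f q = ∑ p : Fin m, f (Fin.cast h p) := (Fin.sum_congr' f h).symm

lemma reorder4a {M : Type*} [AddCommMonoid M] {n1 n2 n3 n4 : ℕ}
    (f : Fin n1 → Fin n2 → Fin n3 → Fin n4 → M) :
    ∑ j, ∑ i, ∑ p, ∑ l, f j i p l = ∑ i, ∑ l, ∑ j, ∑ p, f j i p l := by
  calc ∑ j, ∑ i, ∑ p, ∑ l, f j i p l
      = ∑ i, ∑ j, ∑ p, ∑ l, f j i p l := Finset.sum_comm
    _ = ∑ i, ∑ j, ∑ l, ∑ p, f j i p l :=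
        Finset.sum_congr rfl fun i _ => Finset.sum_congr rfl fun j _ => Finset.sum_comm
    _ = ∑ i, ∑ l, ∑ j, ∑ p, f j i p l := Finset.sum_congr rfl fun i _ => Finset.sum_comm

lemma reorder4b {M : Type*} [AddCommMonoid M] {n1 n2 n3 n4 : ℕ}
    (f : Fin n1 → Fin n2 → Fin n3 → Fin n4 → M) :
    ∑ j, ∑ i, ∑ p, ∑ l, f j i p l = ∑ l, ∑ j, ∑ i, ∑ p, f j i p l := by
  calc ∑ j, ∑ i, ∑ p, ∑ l, f j i p l
      = ∑ j, ∑ i, ∑ l, ∑ p, f j i p l :=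
        Finset.sum_congr rfl fun j _ => Finset.sum_congr rfl fun i _ => Finset.sum_comm
    _ = ∑ j, ∑ l, ∑ i, ∑ p, f j i p l := Finset.sum_congr rfl fun j _ => Finset.sum_comm
    _ = ∑ l, ∑ j, ∑ i, ∑ p, f j i p l := Finset.sum_comm

/-! ### The two halves of the expanded double bracket -/

variable {F : Type*} [Field F] {V : Type*} [AddCommGroup V] [Module F V]

noncomputable def pbody (ω : V →ₗ[F] V →ₗ[F] F) (τ : TensorAlgebra F V →ₗ[F] F)
    (a b c : List V) (j : Fin a.length) (i : Fin b.length) (p : Fin (a.length - 1))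
    (l : Fin c.length) : F :=
  ω (a.get j) (b.get i) *
    (ω (a.get ⟨(↑p + (↑j + 1)) % a.length,
        Nat.mod_lt _ (Nat.lt_of_le_of_lt (Nat.zero_le _) j.isLt)⟩) (c.get l) *
      τ (wordProd F (((a.rotate (↑j + 1)).dropLast).drop (↑p + 1) ++
          ((b.rotate (↑i + 1)).dropLast ++
            (((a.rotate (↑j + 1)).dropLast).take ↑p ++ (c.rotate (↑l + 1)).dropLast)))))

noncomputable def qbody (ω : V →ₗ[F] V →ₗ[F] F) (τ : TensorAlgebra F V →ₗ[F] F)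
    (a b c : List V) (j : Fin a.length) (i : Fin b.length) (p : Fin (b.length - 1))
    (l : Fin c.length) : F :=
  ω (a.get j) (b.get i) *
    (ω (b.get ⟨(↑p + (↑i + 1)) % b.length,
        Nat.mod_lt _ (Nat.lt_of_le_of_lt (Nat.zero_le _) i.isLt)⟩) (c.get l) *
      τ (wordProd F (((b.rotate (↑i + 1)).dropLast).drop (↑p + 1) ++
          ((a.rotate (↑j + 1)).dropLast ++
            (((b.rotate (↑i + 1)).dropLast).take ↑p ++ (c.rotate (↑l + 1)).dropLast)))))

noncomputable def PB (ω : V →ₗ[F] V →ₗ[F] F) (τ : TensorAlgebra F V →ₗ[F] F)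
    (a b c : List V) : F :=
  ∑ i : Fin b.length, ∑ l : Fin c.length, ∑ x : Fin a.length × Fin (a.length - 1),
    pbody ω τ a b c x.1 i x.2 l

noncomputable def QB (ω : V →ₗ[F] V →ₗ[F] F) (τ : TensorAlgebra F V →ₗ[F] F)
    (a b c : List V) : F :=
  ∑ l : Fin c.length, ∑ j : Fin a.length, ∑ x : Fin b.length × Fin (b.length - 1),
    qbody ω τ a b c j x.1 x.2 l

lemma decomp (ω : V →ₗ[F] V →ₗ[F] F) (τ : TensorAlgebra F V →ₗ[F] F) (a b c : List V) :
    traceOf τ (nbExt ω (nb ω a b) c) = PB ω τ a b c + QB ω τ a b c := by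
  have hT : ∀ y : (List V) →₀ F,
      traceOf τ y = Finsupp.linearCombination F (fun w => τ (wordProd F w)) y := by
    intro y; rw [Finsupp.linearCombination_apply]; rfl
  have hE : nbExt ω (nb ω a b) c
      = Finsupp.linearCombination F (fun w => nb ω w c) (nb ω a b) := by
    rw [Finsupp.linearCombination_apply]; rfl
  rw [hT, hE]
  simp only [nb, map_sum, Finsupp.linearCombination_single, map_smul, smul_eq_mul]
  have stepJI : ∀ (j : Fin a.length) (i : Fin b.length),
      (ω (a.get j)) (b.get i) *
        ∑ q : Fin ((a.rotate (↑j + 1)).dropLast ++ (b.rotate (↑i + 1)).dropLast).length,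
          ∑ l : Fin c.length,
            (ω (((a.rotate (↑j + 1)).dropLast ++ (b.rotate (↑i + 1)).dropLast).get q)) (c.get l) *
              τ (wordProd F
                ((((a.rotate (↑j + 1)).dropLast ++ (b.rotate (↑i + 1)).dropLast).rotate
                    (↑q + 1)).dropLast ++ (c.rotate (↑l + 1)).dropLast))
      = (∑ p : Fin (a.length - 1), ∑ l : Fin c.length, pbody ω τ a b c j i p l)
        + (∑ p : Fin (b.length - 1), ∑ l : Fin c.length, qbody ω τ a b c j i p l) := by
    intro j i
    rw [sum_fin_append ((a.rotate (↑j + 1)).dropLast) ((b.rotate (↑i + 1)).dropLast), mul_add]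
    congr 1
    · rw [sum_fin_cast (show a.length - 1 = ((a.rotate (↑j + 1)).dropLast).length from
        (lenD a (↑j + 1)).symm), Finset.mul_sum]
      refine Finset.sum_congr rfl fun p _ => ?_
      rw [Finset.mul_sum]
      refine Finset.sum_congr rfl fun l _ => ?_
      have hpl : (↑p : ℕ) < ((a.rotate (↑j + 1)).dropLast).length := by
        rw [lenD]; exact p.isLt
      simp only [Fin.coe_cast, Fin.coe_castAdd, List.get_eq_getElem, pbody]
      rw [List.getElem_append_left hpl,
        getD a ↑p ↑j hpl (Nat.mod_lt _ (Nat.lt_of_le_of_lt (Nat.zero_le _) j.isLt)),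
        rotApp _ _ _ hpl]
      simp [List.append_assoc]
    · rw [sum_fin_cast (show b.length - 1 = ((b.rotate (↑i + 1)).dropLast).length from
        (lenD b (↑i + 1)).symm), Finset.mul_sum]
      refine Finset.sum_congr rfl fun p _ => ?_
      rw [Finset.mul_sum]
      refine Finset.sum_congr rfl fun l _ => ?_
      have hpl : (↑p : ℕ) < ((b.rotate (↑i + 1)).dropLast).length := by
        rw [lenD]; exact p.isLt
      simp only [Fin.coe_cast, Fin.coe_natAdd, List.get_eq_getElem, qbody]
      rw [List.getElem_append_right (Nat.le_add_right _ _)]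
      simp only [Nat.add_sub_cancel_left]
      rw [getD b ↑p ↑i hpl (Nat.mod_lt _ (Nat.lt_of_le_of_lt (Nat.zero_le _) i.isLt)),
        rotApp2 _ _ _ hpl]
      simp [List.append_assoc]
  refine Eq.trans (Finset.sum_congr rfl fun j _ => Finset.sum_congr rfl fun i _ => stepJI j i) ?_
  simp only [Finset.sum_add_distrib]
  congr 1
  · rw [reorder4a]
    simp only [PB]
    refine Finset.sum_congr rfl fun i _ => Finset.sum_congr rfl fun l _ => ?_
    rw [Fintype.sum_prod_type]
  · rw [reorder4b]
    simp only [QB]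
    refine Finset.sum_congr rfl fun l _ => Finset.sum_congr rfl fun j _ => ?_
    rw [Fintype.sum_prod_type]

lemma trace_cyc (τ : TensorAlgebra F V →ₗ[F] F)
    (hτ : ∀ x y : TensorAlgebra F V, τ (x * y) = τ (y * x)) (x y z w : List V) :
    τ (wordProd F (x ++ (y ++ (z ++ w)))) = τ (wordProd F (z ++ (w ++ (x ++ y)))) := by
  have hprod : ∀ u v : List V, wordProd F (u ++ v) = wordProd F u * wordProd F v := by
    intro u v; simp [wordProd]
  rw [hprod, hprod, hprod, hprod, hprod, hprod]
  calc τ (wordProd F x * (wordProd F y * (wordProd F z * wordProd F w)))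
      = τ ((wordProd F x * wordProd F y) * (wordProd F z * wordProd F w)) := by
        rw [mul_assoc]
    _ = τ ((wordProd F z * wordProd F w) * (wordProd F x * wordProd F y)) := hτ _ _
    _ = τ (wordProd F z * (wordProd F w * (wordProd F x * wordProd F y))) := by
        rw [mul_assoc]

lemma cancel (ω : V →ₗ[F] V →ₗ[F] F) (hω : ∀ v w, ω v w = -ω w v)
    (τ : TensorAlgebra F V →ₗ[F] F)
    (hτ : ∀ x y : TensorAlgebra F V, τ (x * y) = τ (y * x)) (a b c : List V) :
    PB ω τ a b c = - QB ω τ c a b := by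
  have hneg : - QB ω τ c a b = ∑ i : Fin b.length, ∑ l : Fin c.length,
      ∑ y : Fin a.length × Fin (a.length - 1), -(qbody ω τ c a b l y.1 y.2 i) := by
    simp only [QB, ← Finset.sum_neg_distrib]
  rw [hneg]
  simp only [PB]
  refine Finset.sum_congr rfl fun i _ => Finset.sum_congr rfl fun l _ => ?_
  refine Finset.sum_nbij'
    (i := fun x : Fin a.length × Fin (a.length - 1) =>
      ((⟨(↑x.2 + (↑x.1 + 1)) % a.length,
          Nat.mod_lt _ (Nat.lt_of_le_of_lt (Nat.zero_le _) x.1.isLt)⟩ : Fin a.length),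
        (⟨a.length - 2 - ↑x.2, by have := x.2.isLt; omega⟩ : Fin (a.length - 1))))
    (j := fun y : Fin a.length × Fin (a.length - 1) =>
      ((⟨(↑y.2 + (↑y.1 + 1)) % a.length,
          Nat.mod_lt _ (Nat.lt_of_le_of_lt (Nat.zero_le _) y.1.isLt)⟩ : Fin a.length),
        (⟨a.length - 2 - ↑y.2, by have := y.2.isLt; omega⟩ : Fin (a.length - 1))))
    (fun _ _ => Finset.mem_univ _) (fun _ _ => Finset.mem_univ _)
    ?_ ?_ ?_
  · intro x _
    refine Prod.ext (Fin.ext ?_) (Fin.ext ?_)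
    · exact modkey a.length ↑x.1 ↑x.2 x.1.isLt x.2.isLt
    · have := x.2.isLt; simp; omega
  · intro y _
    refine Prod.ext (Fin.ext ?_) (Fin.ext ?_)
    · exact modkey a.length ↑y.1 ↑y.2 y.1.isLt y.2.isLt
    · have := y.2.isLt; simp; omega
  · intro x _
    simp only [pbody, qbody]
    rw [dtX a ↑x.1 ↑x.2 x.1.isLt x.2.isLt, dtY a ↑x.1 ↑x.2 x.1.isLt x.2.isLt,
      trace_cyc τ hτ]
    rw [hω (c.get l)]
    simp only [modkey a.length ↑x.1 ↑x.2 x.1.isLt x.2.isLt, Fin.eta]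
    ring

end JacobiAux

/-- Jacobi identity for the necklace-type bracket on trace functionals of the tensor
algebra: `{{R,S},T} + {{T,R},S} + {{S,T},R} = 0` for monomial trace functionals given by
words `a, b, c`, with `ω` antisymmetric and `τ` a cyclic trace. -/
theorem nbracket_jacobi {F : Type*} [Field F] {V : Type*} [AddCommGroup V] [Module F V]
    (ω : V →ₗ[F] V →ₗ[F] F) (hω : ∀ v w, ω v w = -ω w v)
    (τ : TensorAlgebra F V →ₗ[F] F)
    (hτ : ∀ x y : TensorAlgebra F V, τ (x * y) = τ (y * x))
    (a b c : List V) :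
    traceOf τ (nbExt ω (nb ω a b) c) + traceOf τ (nbExt ω (nb ω c a) b)
      + traceOf τ (nbExt ω (nb ω b c) a) = 0 := by
  rw [JacobiAux.decomp ω τ a b c, JacobiAux.decomp ω τ c a b, JacobiAux.decomp ω τ b c a,
    JacobiAux.cancel ω hω τ hτ a b c, JacobiAux.cancel ω hω τ hτ c a b,
    JacobiAux.cancel ω hω τ hτ b c a]
  ring
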